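/- For two players with strict weak order preferences ≲₁, ≲₂ on a finite outcome set O, the following are equivalent: (1) (≲₁, ≲₂) is out of pattern for O; (2) there exist strict linear extensions <'₁, <'₂ of ≲₁, ≲₂ that can be layered for O; (3) (≲₁, ≲₂) can be layered for O. -/

import Mathlib

namespace SeqGame

inductive GameTree (N O : Type) : Type where
  | leaf (o : O) : GameTree N O
  | node (i : N) (children : List (GameTree N O)) : GameTree N O

namespace GameTree

variable {N O : Type}

/-- The subtree of `T` at position `p` (a list of child indices), if it exists. -/
def subtree : GameTree N O → List ℕ → Option (GameTree N O)
  | t, [] => some t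
  | leaf _, _ :: _ => none
  | node _ c, k :: p =>
    match getElem? c k with
    | some t => subtree t p
    | none => none

/-- A strategy profile: a choice of a child index at every position. -/
abbrev Profile := List ℕ → ℕ

/-- A profile is legal if it chooses an existing child at every internal node. -/
def Legal (T : GameTree N O) (s : Profile) : Prop :=
  ∀ p i c, T.subtree p = some (node i c) → s p < c.length

/-- The profiles `s` and `s'` differ at the (valid, internal) node `p`. -/
def Differs (T : GameTree N O) (s s' : Profile) (p : List ℕ) : Prop :=
  (∃ i c, T.subtree p = some (node i c)) ∧ s p ≠ s' p

/-- The outcome reached when playing according to the profile `s`. -/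
def outcome : GameTree N O → Profile → Option O
  | leaf o, _ => some o
  | node _ c, s =>
    match h : getElem? c (s []) with
    | some t => outcome t (fun p => s (s [] :: p))
    | none => none
decreasing_by
  have hm : t ∈ c := by
    exact List.mem_of_getElem? h
  have := List.sizeOf_lt_of_mem hm
  simp only [node.sizeOf_spec]
  omega

/-- The profile `s` re-rooted at position `p`. -/
def shift (s : Profile) (p : List ℕ) : Profile := fun q => s (p ++ q)

/-- The owner of the node at position `p`, if it is internal. -/
def ownerAt (T : GameTree N O) (p : List ℕ) : Option N :=
  match T.subtree p with
  | some (node i _) => some i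
  | _ => none

/-- `p` lies along the play induced by `s`. -/
def OnPlay (s : Profile) (p : List ℕ) : Prop :=
  ∀ q k, (q ++ [k]) <+: p → s q = k

/-- Improvement property: every player who changes strictly improves the outcome. -/
def Iprop (T : GameTree N O) (pref : N → O → O → Prop) (s s' : Profile) : Prop :=
  ∀ p i c, T.subtree p = some (node i c) → s p ≠ s' p →
    ∃ x y, T.outcome s = some x ∧ T.outcome s' = some y ∧ pref i x y

/-- Subgame improvement property. -/
def SIprop (T : GameTree N O) (pref : N → O → O → Prop) (s s' : Profile) : Prop :=
  ∀ p i c, T.subtree p = some (node i c) → s p ≠ s' p →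
    ∃ x y, outcome (node i c) (shift s p) = some x ∧
      outcome (node i c) (shift s' p) = some y ∧ pref i x y

/-- Laziness property: all changed nodes lie along the play induced by `s'`. -/
def Lprop (T : GameTree N O) (s s' : Profile) : Prop :=
  ∀ p, Differs T s s' p → OnPlay s' p

/-- One player property: at most one player changes his strategy. -/
def P1prop (T : GameTree N O) (s s' : Profile) : Prop :=
  ∃ i : N, ∀ p, Differs T s s' p → T.ownerAt p = some i

/-- Atomicity property: at most one node changes. -/
def Aprop (T : GameTree N O) (s s' : Profile) : Prop :=
  ∀ p q, Differs T s s' p → Differs T s s' q → p = q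

/-- Names of the update properties. -/
inductive Upd : Type | I | SI | L | P1 | A
deriving DecidableEq

/-- Interpretation of an update property name. -/
def holds (T : GameTree N O) (pref : N → O → O → Prop) : Upd → Profile → Profile → Prop
  | .I => Iprop T pref
  | .SI => SIprop T pref
  | .L => Lprop T
  | .P1 => P1prop T
  | .A => Aprop T

/-- The X-dynamics: an actual update (between legal profiles) satisfying
all properties in `X`. -/
def XDyn (X : Set Upd) (T : GameTree N O) (pref : N → O → O → Prop)
    (s s' : Profile) : Prop :=
  Legal T s ∧ Legal T s' ∧ (∃ p, Differs T s s' p) ∧ ∀ u ∈ X, holds T pref u s s'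

/-- A dynamics terminates iff there is no infinite update sequence. -/
def Terminates (D : Profile → Profile → Prop) : Prop :=
  ¬ ∃ f : ℕ → Profile, ∀ n, D (f n) (f (n + 1))

/-- `s'` is a deviation from `s` by the coalition `I`. -/
def Deviation (T : GameTree N O) (I : Set N) (s s' : Profile) : Prop :=
  Legal T s' ∧ ∀ p i c, T.subtree p = some (node i c) → i ∉ I → s p = s' p

/-- Nash equilibrium. -/
def IsNE (T : GameTree N O) (pref : N → O → O → Prop) (s : Profile) : Prop :=
  ∀ i s', Deviation T {i} s s' →
    ∀ x y, T.outcome s = some x → T.outcome s' = some y → ¬ pref i x y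

/-- Subgame perfect equilibrium: an NE in every subgame. -/
def IsSPE (T : GameTree N O) (pref : N → O → O → Prop) (s : Profile) : Prop :=
  ∀ p t, T.subtree p = some t → IsNE t pref (shift s p)

/-- Strong Nash equilibrium (Aumann). -/
def IsSNE (T : GameTree N O) (pref : N → O → O → Prop) (s : Profile) : Prop :=
  ∀ I : Set N, I.Nonempty → ∀ s', Deviation T I s s' →
    ∃ i ∈ I, ∀ x y, T.outcome s = some x → T.outcome s' = some y → ¬ pref i x y

/-- A relation is acyclic if it has no cycle. -/
def Acyclic (r : O → O → Prop) : Prop := ∀ x, ¬ Relation.TransGen r x x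

/-- Incomparability. -/
def Incomp (r : O → O → Prop) (x y : O) : Prop := ¬ r x y ∧ ¬ r y x

/-- Strict weak order: irreflexive, transitive, with transitive incomparability. -/
def IsSWO (r : O → O → Prop) : Prop :=
  (∀ x, ¬ r x x) ∧ (∀ x y z, r x y → r y z → r x z) ∧
    (∀ x y z, Incomp r x y → Incomp r y z → Incomp r x z)

/-- Strict linear order: irreflexive, transitive and total. -/
def IsSLO (r : O → O → Prop) : Prop :=
  (∀ x, ¬ r x x) ∧ (∀ x y z, r x y → r y z → r x z) ∧
    (∀ x y, x ≠ y → r x y ∨ r y x)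

/-- Absence of the main pattern. -/
def OutOfMainPattern (pref : N → O → O → Prop) : Prop :=
  ∀ (i j : N) (x y z : O),
    ¬ (pref i x y ∧ pref i y z ∧ pref j y z ∧ pref j z x)

/-- Absence of the secondary pattern. -/
def OutOfSecondaryPattern (pref : N → O → O → Prop) : Prop :=
  ∀ (i j : N) (w x y z : O),
    ¬ (pref i w x ∧ pref i x y ∧ pref i y z ∧
       Incomp (pref j) x z ∧ pref j z w ∧ Incomp (pref j) w y)

/-- Absence of both patterns. -/
def OutOfPattern (pref : N → O → O → Prop) : Prop :=
  OutOfMainPattern pref ∧ OutOfSecondaryPattern pref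

/-- The preferences can be layered: there is an ordered partition of the
outcomes (given by a layer-index function) such that higher layers are
unanimously weakly preferred, and within a layer no two players agree on
one pair while disagreeing on another pair. -/
def CanBeLayered (pref : N → O → O → Prop) : Prop :=
  ∃ ℓ : O → ℕ,
    (∀ x y, ℓ x < ℓ y → ∀ i, ¬ pref i y x) ∧
    (∀ (i j : N) (w x y z : O), ℓ w = ℓ x → ℓ x = ℓ y → ℓ y = ℓ z →
      ¬ (pref i x y ∧ pref j x y ∧ pref i w z ∧ pref j z w))

end GameTree
end SeqGame


namespace Stmt14Aux

lemma exists_transition {P : ℕ → Prop} {a b : ℕ} (hab : a ≤ b) (ha : P a) (hb : ¬ P b) :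
    ∃ k, a ≤ k ∧ k < b ∧ P k ∧ ¬ P (k+1) := by
  by_contra h
  push_neg at h
  apply hb
  have key : ∀ k, a ≤ k → k ≤ b → P k := by
    intro k
    induction k with
    | zero => intro h1 _; exact (Nat.le_zero.mp h1) ▸ ha
    | succ m ih =>
      intro h1 h2
      rcases Nat.lt_or_ge a (m+1) with hlt | hge
      · exact h m (by omega) (by omega) (ih (by omega) (by omega))
      · exact (by omega : a = m+1) ▸ ha
  exact key b hab le_rfl

/-- Region classification of intermediate nodes of a minimal path. -/
lemma region {O : Type} (σ0 σ1 : O → ℕ)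
    (MP01 : ∀ A B C : O, σ0 A < σ0 B → σ0 B < σ0 C → σ1 B < σ1 C → σ1 C < σ1 A → False)
    (MP10 : ∀ A B C : O, σ1 A < σ1 B → σ1 B < σ1 C → σ0 B < σ0 C → σ0 C < σ0 A → False)
    (n : ℕ)
    (IH : ∀ m, m < n → ∀ f : ℕ → O,
      (∀ k, k < m → σ0 (f k) < σ0 (f (k+1)) ∨ σ1 (f k) < σ1 (f (k+1))) →
      σ0 (f m) < σ0 (f 0) → σ1 (f m) < σ1 (f 0) → False)
    (f : ℕ → O)
    (hch : ∀ k, k < n → σ0 (f k) < σ0 (f (k+1)) ∨ σ1 (f k) < σ1 (f (k+1)))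
    (hx0 : σ0 (f n) < σ0 (f 0)) (hx1 : σ1 (f n) < σ1 (f 0))
    (k : ℕ) (hk1 : 1 ≤ k) (hk2 : k ≤ n - 1) :
    (σ0 (f k) ≤ σ0 (f n) ∧ σ1 (f 0) ≤ σ1 (f k) ∧ (σ0 (f k) = σ0 (f n) ∨ σ1 (f k) = σ1 (f 0))) ∨
    (σ0 (f 0) ≤ σ0 (f k) ∧ σ1 (f k) ≤ σ1 (f n) ∧ (σ0 (f k) = σ0 (f 0) ∨ σ1 (f k) = σ1 (f n))) := by
  have hkn : k < n := by omega
  have hq1 : ¬ (σ0 (f n) < σ0 (f k) ∧ σ1 (f n) < σ1 (f k)) := by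
    rintro ⟨h0, h1⟩
    refine IH (n - k) (by omega) (fun j => f (k + j)) (fun j hj => hch (k + j) (by omega)) ?_ ?_
    · show σ0 (f (k + (n - k))) < σ0 (f (k + 0))
      have e : k + (n - k) = n := by omega
      rw [e]; exact h0
    · show σ1 (f (k + (n - k))) < σ1 (f (k + 0))
      have e : k + (n - k) = n := by omega
      rw [e]; exact h1
  have hq2 : ¬ (σ0 (f k) < σ0 (f 0) ∧ σ1 (f k) < σ1 (f 0)) := by
    rintro ⟨h0, h1⟩
    exact IH k hkn f (fun j hj => hch j (by omega)) h0 h1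
  have base : (σ0 (f k) ≤ σ0 (f n) ∧ σ1 (f 0) ≤ σ1 (f k)) ∨
      (σ0 (f 0) ≤ σ0 (f k) ∧ σ1 (f k) ≤ σ1 (f n)) := by omega
  rcases base with ⟨b1, b2⟩ | ⟨b1, b2⟩
  · left
    refine ⟨b1, b2, ?_⟩
    by_contra hcl
    push_neg at hcl
    exact MP01 (f k) (f n) (f 0) (by omega) hx0 hx1 (by omega)
  · right
    refine ⟨b1, b2, ?_⟩
    by_contra hcl
    push_neg at hcl
    exact MP10 (f k) (f n) (f 0) (by omega) hx1 hx0 (by omega)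

lemma keyCaseA {O : Type} (σ0 σ1 : O → ℕ)
    (MP01 : ∀ A B C : O, σ0 A < σ0 B → σ0 B < σ0 C → σ1 B < σ1 C → σ1 C < σ1 A → False)
    (MP10 : ∀ A B C : O, σ1 A < σ1 B → σ1 B < σ1 C → σ0 B < σ0 C → σ0 C < σ0 A → False)
    (SP01 : ∀ W X Y Z : O, σ0 W < σ0 X → σ0 X < σ0 Y → σ0 Y < σ0 Z →
      σ1 X = σ1 Z → σ1 Z < σ1 W → σ1 W = σ1 Y → False)
    (SP10 : ∀ W X Y Z : O, σ1 W < σ1 X → σ1 X < σ1 Y → σ1 Y < σ1 Z →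
      σ0 X = σ0 Z → σ0 Z < σ0 W → σ0 W = σ0 Y → False)
    (n : ℕ)
    (IH : ∀ m, m < n → ∀ f : ℕ → O,
      (∀ k, k < m → σ0 (f k) < σ0 (f (k+1)) ∨ σ1 (f k) < σ1 (f (k+1))) →
      σ0 (f m) < σ0 (f 0) → σ1 (f m) < σ1 (f 0) → False)
    (f : ℕ → O)
    (hch : ∀ k, k < n → σ0 (f k) < σ0 (f (k+1)) ∨ σ1 (f k) < σ1 (f (k+1)))
    (hx0 : σ0 (f n) < σ0 (f 0)) (hx1 : σ1 (f n) < σ1 (f 0))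
    (hn : 2 ≤ n)
    (ha1 : σ1 (f 1) = σ1 (f n)) (ha2 : σ0 (f 0) < σ0 (f 1)) : False := by
  have hreg := region σ0 σ1 MP01 MP10 n IH f hch hx0 hx1
  -- the last intermediate node b = f (n-1)
  have regb := hreg (n-1) (by omega) le_rfl
  have hedge : σ0 (f (n-1)) < σ0 (f n) ∨ σ1 (f (n-1)) < σ1 (f n) := by
    have e : n - 1 + 1 = n := by omega
    have := hch (n-1) (by omega)
    rwa [e] at this
  have hb : σ0 (f (n-1)) = σ0 (f 0) ∧ σ1 (f (n-1)) < σ1 (f n) := by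
    rcases regb with ⟨b1, b2, b3⟩ | ⟨b1, b2, b3⟩
    · -- NW: impossible via SP01
      have hb0 : σ0 (f (n-1)) < σ0 (f n) := by omega
      have hb1 : σ1 (f (n-1)) = σ1 (f 0) := by
        rcases b3 with h | h
        · omega
        · exact h
      exact absurd (SP01 (f (n-1)) (f n) (f 0) (f 1) hb0 hx0 ha2 ha1.symm (by omega) (by omega))
        (fun h => h)
    · constructor
      · rcases b3 with h | h
        · exact h
        · omega
      · omega
  -- transit
  obtain ⟨k, hk1, hk2, hPk, hPk1⟩ :=
    exists_transition (P := fun k => σ1 (f k) = σ1 (f n)) (a := 1) (b := n - 1)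
      (by omega) ha1 (by omega)
  have regc := hreg k hk1 (by omega)
  have hcSE : σ0 (f 0) ≤ σ0 (f k) := by
    rcases regc with ⟨c1, c2, c3⟩ | ⟨c1, c2, c3⟩
    · omega
    · exact c1
  have regd := hreg (k+1) (by omega) (by omega)
  have hedk : σ0 (f k) < σ0 (f (k+1)) ∨ σ1 (f k) < σ1 (f (k+1)) := hch k (by omega)
  rcases regd with ⟨d1, d2, d3⟩ | ⟨d1, d2, d3⟩
  · -- d in NW
    by_cases hdy : σ1 (f (k+1)) = σ1 (f 0)
    · exact MP01 (f (k+1)) (f (n-1)) (f 1) (by omega) (by omega) (by omega) (by omega)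
    · have hd0 : σ0 (f (k+1)) = σ0 (f n) := by
        rcases d3 with h | h
        · exact h
        · omega
      exact SP10 (f (n-1)) (f n) (f 0) (f (k+1)) hb.2 hx1 (by omega) hd0.symm (by omega) hb.1
  · -- d in SE: impossible
    omega

lemma keyLemma : ∀ (n : ℕ) (O : Type) (σ0 σ1 : O → ℕ),
    (∀ A B C : O, σ0 A < σ0 B → σ0 B < σ0 C → σ1 B < σ1 C → σ1 C < σ1 A → False) →
    (∀ A B C : O, σ1 A < σ1 B → σ1 B < σ1 C → σ0 B < σ0 C → σ0 C < σ0 A → False) →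
    (∀ W X Y Z : O, σ0 W < σ0 X → σ0 X < σ0 Y → σ0 Y < σ0 Z →
      σ1 X = σ1 Z → σ1 Z < σ1 W → σ1 W = σ1 Y → False) →
    (∀ W X Y Z : O, σ1 W < σ1 X → σ1 X < σ1 Y → σ1 Y < σ1 Z →
      σ0 X = σ0 Z → σ0 Z < σ0 W → σ0 W = σ0 Y → False) →
    ∀ f : ℕ → O,
    (∀ k, k < n → σ0 (f k) < σ0 (f (k+1)) ∨ σ1 (f k) < σ1 (f (k+1))) →
    σ0 (f n) < σ0 (f 0) → σ1 (f n) < σ1 (f 0) → False := by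
  intro n
  induction n using Nat.strong_induction_on with
  | _ n IH =>
  intro O σ0 σ1 MP01 MP10 SP01 SP10 f hch hx0 hx1
  have IH01 : ∀ m, m < n → ∀ f : ℕ → O,
      (∀ k, k < m → σ0 (f k) < σ0 (f (k+1)) ∨ σ1 (f k) < σ1 (f (k+1))) →
      σ0 (f m) < σ0 (f 0) → σ1 (f m) < σ1 (f 0) → False :=
    fun m hm f hc h0 h1 => IH m hm O σ0 σ1 MP01 MP10 SP01 SP10 f hc h0 h1
  have IH10 : ∀ m, m < n → ∀ f : ℕ → O,
      (∀ k, k < m → σ1 (f k) < σ1 (f (k+1)) ∨ σ0 (f k) < σ0 (f (k+1))) →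
      σ1 (f m) < σ1 (f 0) → σ0 (f m) < σ0 (f 0) → False :=
    fun m hm f hc h1 h0 => IH m hm O σ0 σ1 MP01 MP10 SP01 SP10 f
      (fun k hk => (hc k hk).symm) h0 h1
  have hn0 : n ≠ 0 := by rintro rfl; omega
  have hn1 : n ≠ 1 := by
    rintro rfl
    have h := hch 0 (by omega)
    simp only [Nat.zero_add] at h
    rcases h with h | h <;> omega
  have hn : 2 ≤ n := by omega
  have rega := region σ0 σ1 MP01 MP10 n IH01 f hch hx0 hx1 1 le_rfl (by omega)
  have hedge0 : σ0 (f 0) < σ0 (f 1) ∨ σ1 (f 0) < σ1 (f 1) := by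
    have h := hch 0 (by omega)
    simpa using h
  rcases rega with ⟨a1, a2, a3⟩ | ⟨a1, a2, a3⟩
  · -- a in NW : case B with swapped coordinates
    have ha0 : σ0 (f 1) = σ0 (f n) := by
      rcases a3 with h | h
      · exact h
      · omega
    exact keyCaseA σ1 σ0 MP10 MP01 SP10 SP01 n IH10 f
      (fun k hk => (hch k hk).symm) hx1 hx0 hn ha0 (by omega)
  · -- a in SE : case A
    have ha1 : σ1 (f 1) = σ1 (f n) := by
      rcases a3 with h | h
      · omega
      · exact h
    exact keyCaseA σ0 σ1 MP01 MP10 SP01 SP10 n IH01 f hch hx0 hx1 hn ha1 (by omega)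


section OrderAssembly

open SeqGame GameTree

variable {O : Type}

noncomputable def rrk (r : O → O → Prop) (x : O) : ℕ := Set.ncard {z | r z x}

lemma rrk_lt_of_rel [Finite O] {r : O → O → Prop} (hr : IsSWO r) {x y : O} (h : r x y) :
    rrk r x < rrk r y := by
  obtain ⟨irr, tr, _⟩ := hr
  have hsub : {z | r z x} ⊆ {z | r z y} := fun z hz => tr _ _ _ hz h
  have hss : {z | r z x} ⊂ {z | r z y} := by
    rw [Set.ssubset_iff_of_subset hsub]
    exact ⟨x, h, fun hx => irr x hx⟩
  exact Set.ncard_lt_ncard hss (Set.toFinite _)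

lemma rel_of_rrk_lt [Finite O] {r : O → O → Prop} (hr : IsSWO r) {x y : O}
    (h : rrk r x < rrk r y) : r x y := by
  obtain ⟨irr, tr, itr⟩ := hr
  by_contra hxy
  rcases Classical.em (r y x) with hyx | hyx
  · have := rrk_lt_of_rel ⟨irr, tr, itr⟩ hyx
    omega
  · have hset : {z | r z x} = {z | r z y} := by
      ext z
      simp only [Set.mem_setOf_eq]
      constructor
      · intro hz
        by_contra hzy
        rcases Classical.em (r y z) with h' | h'
        · exact hyx (tr _ _ _ h' hz)
        · exact (itr z y x ⟨hzy, h'⟩ ⟨hyx, hxy⟩).1 hz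
      · intro hz
        by_contra hzx
        rcases Classical.em (r x z) with h' | h'
        · exact hxy (tr _ _ _ h' hz)
        · exact (itr z x y ⟨hzx, h'⟩ ⟨hxy, hyx⟩).1 hz
    have : rrk r x = rrk r y := by unfold rrk; rw [hset]
    omega

lemma path_of_rtg {α : Type} {R : α → α → Prop} {y x : α} (h : Relation.ReflTransGen R y x) :
    ∃ (n : ℕ) (f : ℕ → α), f 0 = y ∧ f n = x ∧ ∀ k, k < n → R (f k) (f (k+1)) := by
  induction h with
  | refl => exact ⟨0, fun _ => y, rfl, rfl, by omega⟩
  | @tail b c hyb hbc ih =>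
    obtain ⟨n, f, h0, hn, hc⟩ := ih
    refine ⟨n+1, fun k => if k ≤ n then f k else c, ?_, ?_, ?_⟩
    · simpa using h0
    · simp
    · intro k hk
      rcases Nat.lt_or_ge k n with h | h
      · simpa [show k ≤ n by omega, show k+1 ≤ n by omega] using hc k h
      · have hk' : k = n := by omega
        subst hk'
        simpa [hn, show ¬ (k+1 ≤ k) from by omega] using hbc

lemma layered_oop (pref : Fin 2 → O → O → Prop) (hswo : ∀ i, IsSWO (pref i)) :
    CanBeLayered pref → OutOfPattern pref := by
  rintro ⟨ℓ, hA, hB⟩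
  have hle : ∀ (i : Fin 2) (x y : O), pref i x y → ℓ x ≤ ℓ y := by
    intro i x y h
    by_contra hlt
    exact hA y x (by omega) i h
  constructor
  · intro i j x y z hc
    obtain ⟨h1, h2, h3, h4⟩ := hc
    have e1 := hle i x y h1
    have e2 := hle i y z h2
    have e3 := hle j z x h4
    exact hB i j x y z z (by omega) (by omega) (by omega)
      ⟨h2, h3, (hswo i).2.1 x y z h1 h2, h4⟩
  · intro i j w x y z hc
    obtain ⟨h1, h2, h3, h4, h5, h6⟩ := hc
    obtain ⟨irr, tr, itr⟩ := hswo j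
    have e1 := hle i w x h1
    have e2 := hle i x y h2
    have e3 := hle i y z h3
    have e4 := hle j z w h5
    have hxw : pref j x w := by
      rcases Classical.em (pref j x w) with h | h
      · exact h
      rcases Classical.em (pref j w x) with h' | h'
      · exact absurd (tr z w x h5 h') h4.2
      · exact absurd h5 (itr w x z ⟨h', h⟩ h4).2
    have hxy : pref j x y := by
      rcases Classical.em (pref j x y) with h | h
      · exact h
      rcases Classical.em (pref j y x) with h' | h'
      · exact absurd (tr y x w h' hxw) h6.2
      · exact absurd hxw (itr x y w ⟨h, h'⟩ ⟨h6.2, h6.1⟩).1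
    exact hB i j w x y z (by omega) (by omega) (by omega)
      ⟨h2, hxy, (hswo i).2.1 w y z ((hswo i).2.1 w x y h1 h2) h3, h5⟩

lemma construction [Finite O] (pref : Fin 2 → O → O → Prop)
    (hswo : ∀ i, IsSWO (pref i)) (hoop : OutOfPattern pref) :
    ∃ pref' : Fin 2 → O → O → Prop,
      (∀ i, IsSLO (pref' i)) ∧ (∀ i x y, pref i x y → pref' i x y) ∧ CanBeLayered pref' := by
  classical
  set ρ0 : O → ℕ := rrk (pref 0) with hρ0
  set ρ1 : O → ℕ := rrk (pref 1) with hρ1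
  have hp0 : ∀ x y, pref 0 x y ↔ ρ0 x < ρ0 y :=
    fun x y => ⟨rrk_lt_of_rel (hswo 0), rel_of_rrk_lt (hswo 0)⟩
  have hp1 : ∀ x y, pref 1 x y ↔ ρ1 x < ρ1 y :=
    fun x y => ⟨rrk_lt_of_rel (hswo 1), rel_of_rrk_lt (hswo 1)⟩
  have inc0 : ∀ x y : O, ρ0 x = ρ0 y → Incomp (pref 0) x y := by
    intro x y h
    constructor
    · intro hc; have := (hp0 x y).1 hc; omega
    · intro hc; have := (hp0 y x).1 hc; omega
  have inc1 : ∀ x y : O, ρ1 x = ρ1 y → Incomp (pref 1) x y := by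
    intro x y h
    constructor
    · intro hc; have := (hp1 x y).1 hc; omega
    · intro hc; have := (hp1 y x).1 hc; omega
  have MP01 : ∀ A B C : O, ρ0 A < ρ0 B → ρ0 B < ρ0 C → ρ1 B < ρ1 C → ρ1 C < ρ1 A → False :=
    fun A B C h1 h2 h3 h4 => hoop.1 0 1 A B C
      ⟨(hp0 _ _).2 h1, (hp0 _ _).2 h2, (hp1 _ _).2 h3, (hp1 _ _).2 h4⟩
  have MP10 : ∀ A B C : O, ρ1 A < ρ1 B → ρ1 B < ρ1 C → ρ0 B < ρ0 C → ρ0 C < ρ0 A → False :=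
    fun A B C h1 h2 h3 h4 => hoop.1 1 0 A B C
      ⟨(hp1 _ _).2 h1, (hp1 _ _).2 h2, (hp0 _ _).2 h3, (hp0 _ _).2 h4⟩
  have SP01 : ∀ W X Y Z : O, ρ0 W < ρ0 X → ρ0 X < ρ0 Y → ρ0 Y < ρ0 Z →
      ρ1 X = ρ1 Z → ρ1 Z < ρ1 W → ρ1 W = ρ1 Y → False :=
    fun W X Y Z h1 h2 h3 h4 h5 h6 => hoop.2 0 1 W X Y Z
      ⟨(hp0 _ _).2 h1, (hp0 _ _).2 h2, (hp0 _ _).2 h3, inc1 _ _ h4, (hp1 _ _).2 h5, inc1 _ _ h6⟩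
  have SP10 : ∀ W X Y Z : O, ρ1 W < ρ1 X → ρ1 X < ρ1 Y → ρ1 Y < ρ1 Z →
      ρ0 X = ρ0 Z → ρ0 Z < ρ0 W → ρ0 W = ρ0 Y → False :=
    fun W X Y Z h1 h2 h3 h4 h5 h6 => hoop.2 1 0 W X Y Z
      ⟨(hp1 _ _).2 h1, (hp1 _ _).2 h2, (hp1 _ _).2 h3, inc0 _ _ h4, (hp0 _ _).2 h5, inc0 _ _ h6⟩
  set R : O → O → Prop := fun a b => ρ0 a < ρ0 b ∨ ρ1 a < ρ1 b with hR
  have keyR : ∀ x y : O, ρ0 x < ρ0 y → ρ1 x < ρ1 y → ¬ Relation.ReflTransGen R y x := by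
    intro x y h0 h1 hr
    obtain ⟨n, f, hf0, hfn, hch⟩ := path_of_rtg hr
    exact keyLemma n O ρ0 ρ1 MP01 MP10 SP01 SP10 f hch
      (by rw [hf0, hfn]; exact h0) (by rw [hf0, hfn]; exact h1)
  set E : O → O → Prop :=
    fun a b => Relation.ReflTransGen R a b ∧ Relation.ReflTransGen R b a with hE
  have Erefl : ∀ a, E a a := fun a => ⟨.refl, .refl⟩
  have Esymm : ∀ {a b}, E a b → E b a := fun h => ⟨h.2, h.1⟩
  have Etrans : ∀ {a b c}, E a b → E b c → E a c :=
    fun h1 h2 => ⟨h1.1.trans h2.1, h2.2.trans h1.2⟩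
  let s : Setoid O := ⟨E, ⟨fun a => Erefl a, fun h => Esymm h, fun h1 h2 => Etrans h1 h2⟩⟩
  let le : Quotient s → Quotient s → Prop :=
    Quotient.lift₂ (fun a b => Relation.ReflTransGen R a b)
      (fun a b a' b' ha hb => propext
        ⟨fun h => (ha.2.trans h).trans hb.1, fun h => (ha.1.trans h).trans hb.2⟩)
  haveI hpo : IsPartialOrder (Quotient s) le :=
    { refl := fun A => Quotient.inductionOn A (fun a => Relation.ReflTransGen.refl)
      trans := fun A B C => Quotient.inductionOn₃ A B C (fun a b c h1 h2 => h1.trans h2)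
      antisymm := fun A B => Quotient.inductionOn₂ A B
        (fun a b h1 h2 => Quotient.sound ⟨h1, h2⟩) }
  obtain ⟨L, hLlin, hLext⟩ := extend_partialOrder le
  have Ltot : ∀ A B, L A B ∨ L B A := fun A B => hLlin.toTotal.total A B
  have Ltrans : ∀ {A B C}, L A B → L B C → L A C :=
    fun h1 h2 => hLlin.toIsPartialOrder.toIsPreorder.toIsTrans.trans _ _ _ h1 h2
  have Lanti : ∀ {A B}, L A B → L B A → A = B :=
    fun h1 h2 => hLlin.toIsPartialOrder.toAntisymm.antisymm _ _ h1 h2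
  set m : O → O → Prop :=
    fun a b => L (Quotient.mk s a) (Quotient.mk s b) ∧ ¬ L (Quotient.mk s b) (Quotient.mk s a)
    with hm
  set ℓ : O → ℕ := fun x => Set.ncard {z | m z x} with hℓ
  have mtrans : ∀ {a b c}, m a b → m b c → m a c :=
    fun h1 h2 => ⟨Ltrans h1.1 h2.1, fun hc => h2.2 (Ltrans hc h1.1)⟩
  have ℓlt : ∀ {x y}, m x y → ℓ x < ℓ y := by
    intro x y h
    have hsub : {z | m z x} ⊆ {z | m z y} := fun z hz => mtrans hz h
    have hss : {z | m z x} ⊂ {z | m z y} := by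
      rw [Set.ssubset_iff_of_subset hsub]
      refine ⟨x, h, fun hx => hx.2 ?_⟩
      rcases Ltot (Quotient.mk s x) (Quotient.mk s x) with h' | h' <;> exact h'
    exact Set.ncard_lt_ncard hss (Set.toFinite _)
  have ℓeq_of_cls : ∀ {x y}, (Quotient.mk s x) = (Quotient.mk s y) → ℓ x = ℓ y := by
    intro x y h
    have hset : {z | m z x} = {z | m z y} := by
      ext z
      simp only [Set.mem_setOf_eq, hm, h]
    rw [hℓ]
    simp only [hset]
  have cls_of_ℓeq : ∀ {x y : O}, ℓ x = ℓ y → E x y := by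
    intro x y h
    by_contra hne
    have hq : Quotient.mk s x ≠ Quotient.mk s y := fun hq => hne (Quotient.exact hq)
    rcases Ltot (Quotient.mk s x) (Quotient.mk s y) with h' | h'
    · have hmxy : m x y := ⟨h', fun hc => hq (Lanti h' hc)⟩
      have := ℓlt hmxy; omega
    · have hmyx : m y x := ⟨h', fun hc => hq (Lanti hc h')⟩
      have := ℓlt hmyx; omega
  have ℓle_of_rtg : ∀ {x y : O}, Relation.ReflTransGen R x y → ℓ x ≤ ℓ y := by
    intro x y h
    have hL : L (Quotient.mk s x) (Quotient.mk s y) := hLext _ _ h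
    by_cases hq : Quotient.mk s x = Quotient.mk s y
    · exact le_of_eq (ℓeq_of_cls hq)
    · exact le_of_lt (ℓlt ⟨hL, fun hc => hq (Lanti hL hc)⟩)
  have keyE : ∀ {x y : O}, E x y → ¬ (ρ0 x < ρ0 y ∧ ρ1 x < ρ1 y) :=
    fun h hc => keyR _ _ hc.1 hc.2 h.2
  -- tie-breaking well order
  have Wtri : ∀ a b : O, a ≠ b → WellOrderingRel a b ∨ WellOrderingRel b a := by
    intro a b hne
    rcases trichotomous_of WellOrderingRel a b with h | h | h
    · exact Or.inl h
    · exact absurd h hne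
    · exact Or.inr h
  have Wtrans : ∀ {a b c : O}, WellOrderingRel a b → WellOrderingRel b c → WellOrderingRel a c :=
    fun h1 h2 => trans_of WellOrderingRel h1 h2
  have Wirr : ∀ a : O, ¬ WellOrderingRel a a := fun a => irrefl_of WellOrderingRel a
  set T : O → O → Prop :=
    fun a b => ρ0 a < ρ0 b ∨ ρ1 b < ρ1 a ∨ (ρ0 a = ρ0 b ∧ ρ1 a = ρ1 b ∧ WellOrderingRel a b)
    with hT
  have Tirr : ∀ a, ¬ T a a := by
    intro a h
    rcases h with h | h | h
    · omega
    · omega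
    · exact Wirr a h.2.2
  have Tasym : ∀ {a b}, E a b → T a b → T b a → False := by
    intro a b hab h1 h2
    have k1 := keyE hab
    have k2 := keyE (Esymm hab)
    rcases h1 with h1 | h1 | h1 <;> rcases h2 with h2 | h2 | h2 <;>
      first
        | omega
        | (obtain ⟨e1, e2, w1⟩ := h1; first | omega | (obtain ⟨e1', e2', w2⟩ := h2; exact Wirr a (Wtrans w1 w2)))
        | (obtain ⟨e1, e2, w1⟩ := h2; omega)
  have Ttrans : ∀ {a b c}, E a b → E b c → T a b → T b c → T a c := by
    intro a b c hab hbc h1 h2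
    have k_ab := keyE hab
    have k_ba := keyE (Esymm hab)
    have k_bc := keyE hbc
    have k_cb := keyE (Esymm hbc)
    rcases h1 with h1 | h1 | h1 <;> rcases h2 with h2 | h2 | h2
    case inr.inr.inr.inr =>
      exact Or.inr (Or.inr ⟨by omega, by omega, Wtrans h1.2.2 h2.2.2⟩)
    all_goals {
      have h' : ρ0 a < ρ0 c ∨ ρ1 c < ρ1 a := by
        try obtain ⟨e1, e2, w1⟩ := h1
        try obtain ⟨e1', e2', w2⟩ := h2
        omega
      rcases h' with h' | h'
      · exact Or.inl h'
      · exact Or.inr (Or.inl h') }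
  have Ttot : ∀ a b : O, a ≠ b → T a b ∨ T b a := by
    intro a b hne
    by_cases h0 : ρ0 a = ρ0 b ∧ ρ1 a = ρ1 b
    · rcases Wtri a b hne with h | h
      · exact Or.inl (Or.inr (Or.inr ⟨h0.1, h0.2, h⟩))
      · exact Or.inr (Or.inr (Or.inr ⟨h0.1.symm, h0.2.symm, h⟩))
    · have h' : (ρ0 a < ρ0 b ∨ ρ1 b < ρ1 a) ∨ (ρ0 b < ρ0 a ∨ ρ1 a < ρ1 b) := by omega
      rcases h' with (h | h) | (h | h)
      · exact Or.inl (Or.inl h)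
      · exact Or.inl (Or.inr (Or.inl h))
      · exact Or.inr (Or.inl h)
      · exact Or.inr (Or.inr (Or.inl h))
  set P0 : O → O → Prop := fun x y => ℓ x < ℓ y ∨ (ℓ x = ℓ y ∧ T x y) with hP0
  set P1 : O → O → Prop := fun x y => ℓ x < ℓ y ∨ (ℓ x = ℓ y ∧ T y x) with hP1
  have slo0 : IsSLO P0 := by
    refine ⟨?_, ?_, ?_⟩
    · intro x h
      rcases h with h | ⟨_, h⟩
      · omega
      · exact Tirr x h
    · intro x y z h1 h2
      rcases h1 with h1 | ⟨e1, t1⟩ <;> rcases h2 with h2 | ⟨e2, t2⟩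
      · exact Or.inl (by omega)
      · exact Or.inl (by omega)
      · exact Or.inl (by omega)
      · exact Or.inr ⟨by omega, Ttrans (cls_of_ℓeq e1) (cls_of_ℓeq e2) t1 t2⟩
    · intro x y hne
      by_cases he : ℓ x = ℓ y
      · rcases Ttot x y hne with h | h
        · exact Or.inl (Or.inr ⟨he, h⟩)
        · exact Or.inr (Or.inr ⟨he.symm, h⟩)
      · have h' : ℓ x < ℓ y ∨ ℓ y < ℓ x := by omega
        rcases h' with h | h
        · exact Or.inl (Or.inl h)
        · exact Or.inr (Or.inl h)
  have slo1 : IsSLO P1 := by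
    refine ⟨?_, ?_, ?_⟩
    · intro x h
      rcases h with h | ⟨_, h⟩
      · omega
      · exact Tirr x h
    · intro x y z h1 h2
      rcases h1 with h1 | ⟨e1, t1⟩ <;> rcases h2 with h2 | ⟨e2, t2⟩
      · exact Or.inl (by omega)
      · exact Or.inl (by omega)
      · exact Or.inl (by omega)
      · exact Or.inr ⟨by omega,
          Ttrans (Esymm (cls_of_ℓeq e2)) (Esymm (cls_of_ℓeq e1)) t2 t1⟩
    · intro x y hne
      by_cases he : ℓ x = ℓ y
      · rcases Ttot y x (Ne.symm hne) with h | h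
        · exact Or.inl (Or.inr ⟨he, h⟩)
        · exact Or.inr (Or.inr ⟨he.symm, h⟩)
      · have h' : ℓ x < ℓ y ∨ ℓ y < ℓ x := by omega
        rcases h' with h | h
        · exact Or.inl (Or.inl h)
        · exact Or.inr (Or.inl h)
  refine ⟨![P0, P1], ?_, ?_, ?_⟩
  · intro i
    fin_cases i
    · simpa using slo0
    · simpa using slo1
  · intro i x y h
    fin_cases i
    · have hr : ρ0 x < ρ0 y := (hp0 x y).1 h
      have hle' : ℓ x ≤ ℓ y := ℓle_of_rtg (Relation.ReflTransGen.single (Or.inl hr))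
      show P0 x y
      rcases Nat.lt_or_ge (ℓ x) (ℓ y) with h' | h'
      · exact Or.inl h'
      · exact Or.inr ⟨by omega, Or.inl hr⟩
    · have hr : ρ1 x < ρ1 y := (hp1 x y).1 h
      have hle' : ℓ x ≤ ℓ y := ℓle_of_rtg (Relation.ReflTransGen.single (Or.inr hr))
      show P1 x y
      rcases Nat.lt_or_ge (ℓ x) (ℓ y) with h' | h'
      · exact Or.inl h'
      · exact Or.inr ⟨by omega, Or.inr (Or.inl hr)⟩
  · refine ⟨ℓ, ?_, ?_⟩
    · intro x y hxy i
      fin_cases i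
      · intro hc
        rcases (show P0 y x from hc) with h | ⟨h, _⟩ <;> omega
      · intro hc
        rcases (show P1 y x from hc) with h | ⟨h, _⟩ <;> omega
    · intro i j w x y z h1 h2 h3 hc
      obtain ⟨p1, p2, p3, p4⟩ := hc
      have exy : E x y := cls_of_ℓeq h2
      have ewz : E w z := cls_of_ℓeq (by omega)
      fin_cases i <;> fin_cases j
      · -- i = 0, j = 0
        have t3 : T w z := by
          rcases (show P0 w z from p3) with h | h
          · exact absurd h (by omega)
          · exact h.2
        have t4 : T z w := by
          rcases (show P0 z w from p4) with h | h
          · exact absurd h (by omega)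
          · exact h.2
        exact Tasym ewz t3 t4
      · -- i = 0, j = 1
        have t1 : T x y := by
          rcases (show P0 x y from p1) with h | h
          · exact absurd h (by omega)
          · exact h.2
        have t2 : T y x := by
          rcases (show P1 x y from p2) with h | h
          · exact absurd h (by omega)
          · exact h.2
        exact Tasym exy t1 t2
      · -- i = 1, j = 0
        have t1 : T y x := by
          rcases (show P1 x y from p1) with h | h
          · exact absurd h (by omega)
          · exact h.2
        have t2 : T x y := by
          rcases (show P0 x y from p2) with h | h
          · exact absurd h (by omega)
          · exact h.2
        exact Tasym exy t2 t1
      · -- i = 1, j = 1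
        have t3 : T z w := by
          rcases (show P1 w z from p3) with h | h
          · exact absurd h (by omega)
          · exact h.2
        have t4 : T w z := by
          rcases (show P1 z w from p4) with h | h
          · exact absurd h (by omega)
          · exact h.2
        exact Tasym ewz t4 t3

end OrderAssembly

end Stmt14Aux


open SeqGame GameTree in
/-- For two players with strict weak order preferences: out of pattern ↔
existence of layerable strict linear extensions ↔ layerable. -/
theorem stmt_14 {O : Type} [Finite O] (pref : Fin 2 → O → O → Prop)
    (hswo : ∀ i, IsSWO (pref i)) :
    (OutOfPattern pref ↔
      ∃ pref' : Fin 2 → O → O → Prop,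
        (∀ i, IsSLO (pref' i)) ∧ (∀ i x y, pref i x y → pref' i x y) ∧
        CanBeLayered pref') ∧
    (OutOfPattern pref ↔ CanBeLayered pref) := by
  have D1 := Stmt14Aux.construction pref hswo
  have D3 := Stmt14Aux.layered_oop pref hswo
  have D2 : (∃ pref' : Fin 2 → O → O → Prop,
      (∀ i, IsSLO (pref' i)) ∧ (∀ i x y, pref i x y → pref' i x y) ∧
      CanBeLayered pref') → CanBeLayered pref := by
    rintro ⟨pref', _, hext, ℓ, hA, hB⟩
    refine ⟨ℓ, ?_, ?_⟩
    · intro x y h i hc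
      exact hA x y h i (hext i y x hc)
    · intro i j w x y z h1 h2 h3 hc
      exact hB i j w x y z h1 h2 h3
        ⟨hext _ _ _ hc.1, hext _ _ _ hc.2.1, hext _ _ _ hc.2.2.1, hext _ _ _ hc.2.2.2⟩
  exact ⟨⟨D1, fun h => D3 (D2 h)⟩, ⟨fun h => D2 (D1 h), D3⟩⟩
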